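/- Characterization of vanishing descent: Under assumptions (H1) and (H2), for every x ∈ S the equality ∇θ(x)F(x) = 0 holds if and only if the following three conditions hold simultaneously: (v(x))⁺ = 0; g_j(x)v_j(x) = 0 for j = 1,…,k; and ∇θ(x)H(x)[I_n − B(x)ᵀQ(x)⁻¹B(x)]H(x) = 0. -/

import Mathlib

open Matrix Set Filter

noncomputable section

/-- The gradient of `f : ℝⁿ → ℝ` at `x`, as the vector of partial derivatives. -/
def grad {n : ℕ} (f : (Fin n → ℝ) → ℝ) (x : Fin n → ℝ) : Fin n → ℝ :=
  fun j => fderiv ℝ f x (Pi.single j 1)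

/-- The feasible set `S`. -/
def feas {n m k : ℕ} (h : Fin m → (Fin n → ℝ) → ℝ) (g : Fin k → (Fin n → ℝ) → ℝ) :
    Set (Fin n → ℝ) :=
  {x | (∀ i, h i x = 0) ∧ (∀ j, g j x ≤ 0)}

/-- Jacobian of the equality constraints (rows `∇h_i(x)`). -/
def matA {n m : ℕ} (h : Fin m → (Fin n → ℝ) → ℝ) (x : Fin n → ℝ) :
    Matrix (Fin m) (Fin n) ℝ :=
  Matrix.of fun i => grad (h i) x

/-- Jacobian of the inequality constraints (rows `∇g_j(x)`). -/
def matB {n k : ℕ} (g : Fin k → (Fin n → ℝ) → ℝ) (x : Fin n → ℝ) :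
    Matrix (Fin k) (Fin n) ℝ :=
  Matrix.of fun j => grad (g j) x

/-- `H(x) = I − Aᵀ(AAᵀ)⁻¹A`. -/
def matH {n m : ℕ} (h : Fin m → (Fin n → ℝ) → ℝ) (x : Fin n → ℝ) :
    Matrix (Fin n) (Fin n) ℝ :=
  1 - (matA h x)ᵀ * (matA h x * (matA h x)ᵀ)⁻¹ * matA h x

/-- `Q(x) = B(x)H(x)B(x)ᵀ − diag(g(x))`. -/
def matQ {n m k : ℕ} (h : Fin m → (Fin n → ℝ) → ℝ) (g : Fin k → (Fin n → ℝ) → ℝ)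
    (x : Fin n → ℝ) : Matrix (Fin k) (Fin k) ℝ :=
  matB g x * matH h x * (matB g x)ᵀ - Matrix.diagonal (fun j => g j x)

/-- Assumption (H1). -/
def hypH1 {n m k : ℕ} (θ : (Fin n → ℝ) → ℝ) (h : Fin m → (Fin n → ℝ) → ℝ)
    (g : Fin k → (Fin n → ℝ) → ℝ) : Prop :=
  (feas h g).Nonempty ∧ ∀ x₀ ∈ feas h g, IsCompact {x ∈ feas h g | θ x ≤ θ x₀}

/-- Assumption (H2). -/
def hypH2 {n m k : ℕ} (h : Fin m → (Fin n → ℝ) → ℝ) (g : Fin k → (Fin n → ℝ) → ℝ) : Prop :=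
  ∀ x ∈ feas h g,
    LinearIndependent ℝ
      (Sum.elim (fun i : Fin m => grad (h i) x)
        (fun j : {j : Fin k // g j x = 0} => grad (g (j : Fin k)) x))

/-- `P(x) = Q(x)⁻¹ B(x) H(x)`. -/
def matP {n m k : ℕ} (h : Fin m → (Fin n → ℝ) → ℝ) (g : Fin k → (Fin n → ℝ) → ℝ)
    (x : Fin n → ℝ) : Matrix (Fin k) (Fin n) ℝ :=
  (matQ h g x)⁻¹ * matB g x * matH h x

/-- `v(x) = P(x)(∇θ(x))ᵀ`. -/
def vecv {n m k : ℕ} (θ : (Fin n → ℝ) → ℝ) (h : Fin m → (Fin n → ℝ) → ℝ)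
    (g : Fin k → (Fin n → ℝ) → ℝ) (x : Fin n → ℝ) : Fin k → ℝ :=
  (matP h g x).mulVec (grad θ x)

/-- componentwise positive part. -/
def pPart {k : ℕ} (w : Fin k → ℝ) : Fin k → ℝ := fun j => max 0 (w j)

/-- `R₃(x)`. -/
def matR3 {n k : ℕ} (b c : Fin k → (Fin n → ℝ) → ℝ) (p : Fin k → ℕ) (x : Fin n → ℝ)
    (v : Fin k → ℝ) : Matrix (Fin k) (Fin k) ℝ :=
  Matrix.diagonal (fun j => b j x + c j x * (max 0 (v j)) ^ (2 * p j))

/-- The vector field `F(x)` of (2.4), (2.5). -/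
def vecF {n m k : ℕ} (θ : (Fin n → ℝ) → ℝ) (h : Fin m → (Fin n → ℝ) → ℝ)
    (g : Fin k → (Fin n → ℝ) → ℝ)
    (R1 : (Fin n → ℝ) → Matrix (Fin n) (Fin n) ℝ)
    (R2 : (Fin n → ℝ) → Matrix (Fin k) (Fin k) ℝ)
    (a b c : Fin k → (Fin n → ℝ) → ℝ) (p : Fin k → ℕ) (x : Fin n → ℝ) : Fin n → ℝ :=
  -(((matH h x - (matP h g x)ᵀ * matQ h g x * matP h g x) * R1 x *
      (matH h x - (matP h g x)ᵀ * matQ h g x * matP h g x)).mulVec (grad θ x))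
  - ((matP h g x)ᵀ * Matrix.diagonal (fun j => g j x) *
      (R2 x * Matrix.diagonal (fun j => g j x) - Matrix.diagonal (fun j => a j x))).mulVec
        (vecv θ h g x)
  - ((matP h g x)ᵀ * matR3 b c p x (vecv θ h g x)).mulVec (pPart (vecv θ h g x))

/-- The set `Φ` of KKT points. -/
def KKTset {n m k : ℕ} (θ : (Fin n → ℝ) → ℝ) (h : Fin m → (Fin n → ℝ) → ℝ)
    (g : Fin k → (Fin n → ℝ) → ℝ) : Set (Fin n → ℝ) :=
  {x | x ∈ feas h g ∧ ∃ (lam : Fin m → ℝ) (mu : Fin k → ℝ),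
    (∀ j, 0 ≤ mu j) ∧
    grad θ x + (∑ i, lam i • grad (h i) x) + (∑ j, mu j • grad (g j) x) = 0 ∧
    (∑ j, mu j * g j x) = 0}


section auxLemmas

variable {n m k : ℕ}

lemma vecMul_of_symm {N : ℕ} (M : Matrix (Fin N) (Fin N) ℝ) (hM : Mᵀ = M) (u : Fin N → ℝ) :
    u ᵥ* M = M *ᵥ u := by
  conv_lhs => rw [← hM]
  rw [Matrix.vecMul_transpose]

lemma matH_symm (h : Fin m → (Fin n → ℝ) → ℝ) (x : Fin n → ℝ) :
    (matH h x)ᵀ = matH h x := by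
  unfold matH
  simp [Matrix.transpose_sub, Matrix.transpose_mul, Matrix.transpose_nonsing_inv,
    Matrix.mul_assoc]

lemma matH_idem (h : Fin m → (Fin n → ℝ) → ℝ) (x : Fin n → ℝ) :
    matH h x * matH h x = matH h x := by
  unfold matH
  by_cases hd : IsUnit ((matA h x) * (matA h x)ᵀ).det
  · have h1 : ((matA h x) * (matA h x)ᵀ)⁻¹ * ((matA h x) * (matA h x)ᵀ) = 1 :=
      Matrix.nonsing_inv_mul _ hd
    have hXX : (matA h x)ᵀ * ((matA h x) * (matA h x)ᵀ)⁻¹ * (matA h x) *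
        ((matA h x)ᵀ * ((matA h x) * (matA h x)ᵀ)⁻¹ * (matA h x))
        = (matA h x)ᵀ * ((matA h x) * (matA h x)ᵀ)⁻¹ * (matA h x) := by
      have e : (matA h x)ᵀ * ((matA h x) * (matA h x)ᵀ)⁻¹ * (matA h x) *
          ((matA h x)ᵀ * ((matA h x) * (matA h x)ᵀ)⁻¹ * (matA h x))
          = (matA h x)ᵀ * ((((matA h x) * (matA h x)ᵀ)⁻¹ * ((matA h x) * (matA h x)ᵀ)) *
              (((matA h x) * (matA h x)ᵀ)⁻¹ * (matA h x))) := by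
        simp only [Matrix.mul_assoc]
      rw [e, h1, Matrix.one_mul, ← Matrix.mul_assoc]
    rw [sub_mul, one_mul, mul_sub, mul_one, hXX]
    abel
  · rw [Matrix.nonsing_inv_apply_not_isUnit _ hd]
    simp

lemma matQ_symm (h : Fin m → (Fin n → ℝ) → ℝ) (g : Fin k → (Fin n → ℝ) → ℝ) (x : Fin n → ℝ) :
    (matQ h g x)ᵀ = matQ h g x := by
  unfold matQ
  simp [Matrix.transpose_sub, Matrix.transpose_mul, matH_symm, Matrix.mul_assoc]

lemma inv_mul_inv' {N : ℕ} (Q : Matrix (Fin N) (Fin N) ℝ) : Q⁻¹ * Q * Q⁻¹ = Q⁻¹ := by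
  by_cases hd : IsUnit Q.det
  · rw [Matrix.nonsing_inv_mul _ hd, Matrix.one_mul]
  · rw [Matrix.nonsing_inv_apply_not_isUnit _ hd]
    simp

lemma matM_eq (h : Fin m → (Fin n → ℝ) → ℝ) (g : Fin k → (Fin n → ℝ) → ℝ) (x : Fin n → ℝ) :
    matH h x - (matP h g x)ᵀ * matQ h g x * matP h g x
      = matH h x * (1 - (matB g x)ᵀ * (matQ h g x)⁻¹ * matB g x) * matH h x := by
  have hPt : (matP h g x)ᵀ = matH h x * (matB g x)ᵀ * (matQ h g x)⁻¹ := by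
    show ((matQ h g x)⁻¹ * matB g x * matH h x)ᵀ = _
    simp [Matrix.transpose_mul, matH_symm, Matrix.transpose_nonsing_inv, matQ_symm,
      Matrix.mul_assoc]
  have hP : matP h g x = (matQ h g x)⁻¹ * matB g x * matH h x := rfl
  rw [hPt, hP]
  have h2 : matH h x * (matB g x)ᵀ * (matQ h g x)⁻¹ * matQ h g x *
      ((matQ h g x)⁻¹ * matB g x * matH h x)
      = matH h x * ((matB g x)ᵀ * (matQ h g x)⁻¹ * matB g x) * matH h x := by
    calc matH h x * (matB g x)ᵀ * (matQ h g x)⁻¹ * matQ h g x *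
        ((matQ h g x)⁻¹ * matB g x * matH h x)
        = matH h x * ((matB g x)ᵀ * (((matQ h g x)⁻¹ * matQ h g x * (matQ h g x)⁻¹) *
            (matB g x * matH h x))) := by simp only [Matrix.mul_assoc]
      _ = _ := by rw [inv_mul_inv']; simp only [Matrix.mul_assoc]
  rw [h2, Matrix.mul_sub, Matrix.mul_one, Matrix.sub_mul]
  rw [matH_idem]

lemma dot_quad_split {N : ℕ} (u : Fin N → ℝ) (Mm : Matrix (Fin N) (Fin N) ℝ) (hMs : Mmᵀ = Mm)
    (R : Matrix (Fin N) (Fin N) ℝ) :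
    u ⬝ᵥ ((Mm * R * Mm) *ᵥ u) = (Mm *ᵥ u) ⬝ᵥ (R *ᵥ (Mm *ᵥ u)) := by
  rw [← Matrix.mulVec_mulVec, ← Matrix.mulVec_mulVec, Matrix.dotProduct_mulVec,
    vecMul_of_symm Mm hMs u]

lemma dot_Pt {N K : ℕ} (u : Fin N → ℝ) (P : Matrix (Fin K) (Fin N) ℝ)
    (X : Matrix (Fin K) (Fin K) ℝ) (w : Fin K → ℝ) :
    u ⬝ᵥ ((Pᵀ * X) *ᵥ w) = (P *ᵥ u) ⬝ᵥ (X *ᵥ w) := by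
  rw [← Matrix.mulVec_mulVec, Matrix.dotProduct_mulVec, Matrix.vecMul_transpose]

lemma dot_diag {K : ℕ} (d : Fin K → ℝ) (v w : Fin K → ℝ) :
    v ⬝ᵥ ((Matrix.diagonal d) *ᵥ w) = ∑ j, d j * (v j * w j) := by
  simp only [dotProduct, Matrix.mulVec_diagonal]
  exact Finset.sum_congr rfl fun j _ => by ring

end auxLemmas
/-- Characterization of vanishing descent: for `x ∈ S`, `∇θ(x)F(x) = 0` iff
`(v(x))⁺ = 0`, `gⱼ(x)vⱼ(x) = 0` for all `j`, and
`∇θ(x)H(x)[I − B(x)ᵀQ(x)⁻¹B(x)]H(x) = 0`. -/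
theorem stmt_9
    {n m k : ℕ} (hmn : m < n)
    (θ : (Fin n → ℝ) → ℝ) (h : Fin m → (Fin n → ℝ) → ℝ) (g : Fin k → (Fin n → ℝ) → ℝ)
    (hθ : ContDiff ℝ 2 θ) (hhC : ∀ i, ContDiff ℝ 2 (h i)) (hgC : ∀ j, ContDiff ℝ 2 (g j))
    (hH1 : hypH1 θ h g) (hH2 : hypH2 h g)
    (R1 : (Fin n → ℝ) → Matrix (Fin n) (Fin n) ℝ)
    (R2 : (Fin n → ℝ) → Matrix (Fin k) (Fin k) ℝ)
    (a b c : Fin k → (Fin n → ℝ) → ℝ) (p : Fin k → ℕ)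
    (hR1C : ∀ i j, ContDiff ℝ 1 fun x => R1 x i j)
    (hR1pd : ∀ x, (R1 x).PosDef)
    (hR2C : ∀ i j, ContDiff ℝ 1 fun x => R2 x i j)
    (hR2psd : ∀ x, (R2 x).PosSemidef)
    (haC : ∀ j, ContDiff ℝ 1 (a j)) (hbC : ∀ j, ContDiff ℝ 1 (b j))
    (hcC : ∀ j, ContDiff ℝ 1 (c j))
    (ha0 : ∀ j x, 0 ≤ a j x) (hb0 : ∀ j x, 0 ≤ b j x) (hc0 : ∀ j x, 0 ≤ c j x)
    (hbc : ∀ x ∈ feas h g, ∀ j, 0 < b j x + c j x)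
    (hpd : ∀ x ∈ feas h g, (R2 x).PosDef ∨ (Matrix.diagonal fun j => a j x).PosDef)
    (hp : ∀ j, 1 ≤ p j) :
    ∀ x ∈ feas h g,
      (grad θ x ⬝ᵥ vecF θ h g R1 R2 a b c p x = 0 ↔
        (pPart (vecv θ h g x) = 0 ∧
         (∀ j, g j x * vecv θ h g x j = 0) ∧
         Matrix.vecMul (grad θ x)
           (matH h x * (1 - (matB g x)ᵀ * (matQ h g x)⁻¹ * matB g x) * matH h x) = 0)) := by
  intro x hx
  classical
  have hxg : ∀ j, g j x ≤ 0 := hx.2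
  set u := grad θ x with hu
  set v := vecv θ h g x with hv
  set P := matP h g x with hP
  set Q := matQ h g x with hQ
  set Hm := matH h x with hHm
  set Bm := matB g x with hBm
  set D : Matrix (Fin k) (Fin k) ℝ := Matrix.diagonal (fun j => g j x) with hD
  set Da : Matrix (Fin k) (Fin k) ℝ := Matrix.diagonal (fun j => a j x) with hDa
  set M := Hm - Pᵀ * Q * P with hM
  have hHsym : Hmᵀ = Hm := by rw [hHm]; exact matH_symm h x
  have hQsym : Qᵀ = Q := by rw [hQ]; exact matQ_symm h g x
  have hMsym : Mᵀ = M := by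
    rw [hM]
    simp only [Matrix.transpose_sub, Matrix.transpose_mul, Matrix.transpose_transpose,
      hHsym, hQsym, Matrix.mul_assoc]
  have hMM : M = Hm * (1 - Bmᵀ * Q⁻¹ * Bm) * Hm := by
    rw [hM, hHm, hBm, hQ, hP]; exact matM_eq h g x
  have hvPu : v = P *ᵥ u := rfl
  -- the four nonnegative pieces
  set s1 : ℝ := (M *ᵥ u) ⬝ᵥ (R1 x *ᵥ (M *ᵥ u)) with hs1
  set s2 : ℝ := (D *ᵥ v) ⬝ᵥ (R2 x *ᵥ (D *ᵥ v)) with hs2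
  set s3 : ℝ := ∑ j, a j x * (-(g j x)) * (v j * v j) with hs3
  set s4 : ℝ := ∑ j, (b j x + c j x * (pPart v j) ^ (2 * p j)) * (pPart v j * pPart v j)
    with hs4
  have hDsym : Dᵀ = D := by rw [hD]; exact Matrix.diagonal_transpose _
  have key : u ⬝ᵥ vecF θ h g R1 R2 a b c p x = -(s1 + s2 + s3 + s4) := by
    simp only [vecF]
    rw [← hHm, ← hP, ← hQ, ← hv, ← hu, ← hD, ← hDa, ← hM]
    rw [dotProduct_sub, dotProduct_sub, dotProduct_neg]
    have e1 : u ⬝ᵥ ((M * R1 x * M) *ᵥ u) = s1 := by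
      rw [hs1]; exact dot_quad_split u M hMsym (R1 x)
    have e2 : u ⬝ᵥ ((Pᵀ * D * (R2 x * D - Da)) *ᵥ v)
        = s2 - ∑ j, g j x * a j x * (v j * v j) := by
      rw [Matrix.mul_assoc, dot_Pt u P _ v, ← hvPu]
      rw [Matrix.mul_sub, Matrix.sub_mulVec, dotProduct_sub]
      have e21 : v ⬝ᵥ ((D * (R2 x * D)) *ᵥ v) = s2 := by
        rw [← Matrix.mul_assoc, hs2]
        exact dot_quad_split v D hDsym (R2 x)
      have e22 : v ⬝ᵥ ((D * Da) *ᵥ v) = ∑ j, g j x * a j x * (v j * v j) := by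
        rw [hD, hDa, Matrix.diagonal_mul_diagonal, dot_diag]
      rw [e21, e22]
    have e3 : u ⬝ᵥ ((Pᵀ * matR3 b c p x v) *ᵥ pPart v) = s4 := by
      rw [dot_Pt u P _ (pPart v), ← hvPu]
      show v ⬝ᵥ ((Matrix.diagonal _) *ᵥ pPart v) = s4
      rw [dot_diag, hs4]
      refine Finset.sum_congr rfl fun j _ => ?_
      simp only [pPart]
      rcases le_total (v j) 0 with ht | ht
      · rw [max_eq_left ht]; ring
      · rw [max_eq_right ht]
    rw [e1, e2, e3]
    have e4 : s3 = -∑ j, g j x * a j x * (v j * v j) := by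
      rw [hs3, ← Finset.sum_neg_distrib]
      exact Finset.sum_congr rfl fun j _ => by ring
    rw [e4]
    ring
  have hs1nn : 0 ≤ s1 := by
    have := (hR1pd x).posSemidef.dotProduct_mulVec_nonneg (M *ᵥ u)
    simpa [hs1] using this
  have hs2nn : 0 ≤ s2 := by
    have := (hR2psd x).dotProduct_mulVec_nonneg (D *ᵥ v)
    simpa [hs2] using this
  have hs3term : ∀ j, 0 ≤ a j x * (-(g j x)) * (v j * v j) := fun j =>
    mul_nonneg (mul_nonneg (ha0 j x) (neg_nonneg.2 (hxg j))) (mul_self_nonneg _)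
  have hs4term : ∀ j, 0 ≤ (b j x + c j x * (pPart v j) ^ (2 * p j)) *
      (pPart v j * pPart v j) := fun j =>
    mul_nonneg (add_nonneg (hb0 j x) (mul_nonneg (hc0 j x)
      (pow_nonneg (le_max_left 0 _) _))) (mul_self_nonneg _)
  have hs3nn : 0 ≤ s3 := Finset.sum_nonneg fun j _ => hs3term j
  have hs4nn : 0 ≤ s4 := Finset.sum_nonneg fun j _ => hs4term j
  -- equivalence between s1 = 0 and the third condition
  have hthird : s1 = 0 ↔ u ᵥ* (Hm * (1 - Bmᵀ * Q⁻¹ * Bm) * Hm) = 0 := by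
    rw [← hMM, vecMul_of_symm M hMsym u]
    constructor
    · intro h1
      by_contra hne
      have := (hR1pd x).dotProduct_mulVec_pos (x := M *ᵥ u) hne
      rw [show star (M *ᵥ u) = M *ᵥ u from funext fun i => star_trivial _] at this
      rw [← hs1] at this
      linarith
    · intro hMu
      rw [hs1, hMu]
      simp
  rw [key]
  constructor
  · intro h0
    have hz : s1 + s2 + s3 + s4 = 0 := by linarith [neg_eq_zero.mp h0]
    have h1 : s1 = 0 := by linarith
    have h2 : s2 = 0 := by linarith
    have h3 : s3 = 0 := by linarith
    have h4 : s4 = 0 := by linarith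
    have hgv : ∀ j, g j x * v j = 0 := by
      rcases hpd x hx with hr2 | hda
      · have hDv : D *ᵥ v = 0 := by
          by_contra hne
          have := hr2.dotProduct_mulVec_pos (x := D *ᵥ v) hne
          rw [show star (D *ᵥ v) = D *ᵥ v from funext fun i => star_trivial _] at this
          rw [← hs2] at this
          linarith
        intro j
        have := congrFun hDv j
        rw [hD] at this
        simpa [Matrix.mulVec_diagonal] using this
      · have hapos : ∀ j, 0 < a j x := Matrix.posDef_diagonal_iff.mp hda
        have hterms' : ∀ j, a j x * (-(g j x)) * (v j * v j) = 0 := by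
          have := (Finset.sum_eq_zero_iff_of_nonneg (fun j _ => hs3term j)).mp
            (by rw [← hs3]; exact h3)
          exact fun j => this j (Finset.mem_univ j)
        intro j
        rcases mul_eq_zero.mp (hterms' j) with h' | h'
        · rcases mul_eq_zero.mp h' with h'' | h''
          · exact absurd h'' (hapos j).ne'
          · rw [neg_eq_zero.mp h'']; ring
        · rw [mul_self_eq_zero.mp h']; ring
    refine ⟨?_, hgv, (hthird.mp h1)⟩
    -- pPart v = 0
    have hterms4 : ∀ j, (b j x + c j x * (pPart v j) ^ (2 * p j)) *
        (pPart v j * pPart v j) = 0 := by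
      have := (Finset.sum_eq_zero_iff_of_nonneg (fun j _ => hs4term j)).mp
        (by rw [← hs4]; exact h4)
      exact fun j => this j (Finset.mem_univ j)
    funext j
    by_contra hne
    have htpos : 0 < pPart v j := lt_of_le_of_ne (le_max_left 0 _) (Ne.symm hne)
    have hfac : 0 < b j x + c j x * (pPart v j) ^ (2 * p j) := by
      rcases (hb0 j x).lt_or_eq with hb | hb
      · exact add_pos_of_pos_of_nonneg hb
          (mul_nonneg (hc0 j x) (pow_nonneg htpos.le _))
      · have hc : 0 < c j x := by
          have := hbc x hx j
          rw [← hb] at this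
          simpa using this
        exact add_pos_of_nonneg_of_pos (hb0 j x)
          (mul_pos hc (pow_pos htpos _))
    exact absurd (hterms4 j) (ne_of_gt (mul_pos hfac (mul_pos htpos htpos)))
  · rintro ⟨hp1, hp2, hp3⟩
    have h1 : s1 = 0 := hthird.mpr hp3
    have hDv : D *ᵥ v = 0 := by
      funext j
      rw [hD]
      simpa [Matrix.mulVec_diagonal] using hp2 j
    have h2 : s2 = 0 := by rw [hs2, hDv]; simp
    have h3 : s3 = 0 := by
      rw [hs3]
      refine Finset.sum_eq_zero fun j _ => ?_
      have : a j x * (-(g j x)) * (v j * v j) = -(a j x * ((g j x * v j) * v j)) := by ring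
      rw [this, hp2 j]; ring
    have h4 : s4 = 0 := by
      rw [hs4]
      refine Finset.sum_eq_zero fun j _ => ?_
      rw [congrFun hp1 j]
      simp
    rw [h1, h2, h3, h4]
    ring

end
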